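/- In the configuration model for d-regular multigraphs on N vertices (Nd even), let h(t) denote the number of pairs (s,e) of the configuration ψ(t) that cross a fixed boundary b (i.e., s ≤ b < e). If two tuples t, t' ∈ Π differ in exactly one coordinate, then |h(t) − h(t')| ≤ 2. -/

import Mathlib

/-- The sequential pairing procedure of the configuration model: given the set `U` of
remaining half-edges and a list of choices, repeatedly pair the smallest remaining
half-edge `u₀` with the `t`-th smallest remaining half-edge and remove both. -/
def buildMatching : Finset ℕ → List ℕ → List (ℕ × ℕ)
  | _, [] => []
  | U, t :: ts =>
    let sorted := U.sort (· ≤ ·)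
    let u0 := sorted.getD 0 0
    let e := sorted.getD t 0
    (u0, e) :: buildMatching ((U.erase u0).erase e) ts

/-- Number of pairs of the configuration `ψ(t)` on half-edges `{0, …, Nd−1}` crossing the
boundary `b`, i.e. pairs `(s, e)` with `s ≤ b < e`. -/
def crossCount (N d b : ℕ) (ts : List ℕ) : ℕ :=
  ((buildMatching (Finset.range (N * d)) ts).filter fun q => q.1 ≤ b ∧ b < q.2).length

/-- indicator that x and y are on different sides of b -/
def flipB (b x y : ℕ) : ℕ := if (x ≤ b ↔ y ≤ b) then 0 else 1

/-- number of positions where L and L' are on different sides of b -/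
def mism (b : ℕ) : List ℕ → List ℕ → ℕ
  | x :: L, y :: L' => flipB b x y + mism b L L'
  | _, _ => 0

@[simp] lemma mism_nil (b : ℕ) (L : List ℕ) : mism b L [] = 0 := by cases L <;> rfl
@[simp] lemma mism_nil' (b : ℕ) (L : List ℕ) : mism b [] L = 0 := by cases L <;> rfl
@[simp] lemma mism_cons (b x y : ℕ) (L L' : List ℕ) :
    mism b (x :: L) (y :: L') = flipB b x y + mism b L L' := rfl

lemma flipB_self (b x : ℕ) : flipB b x x = 0 := by simp [flipB]

lemma flipB_comm (b x y : ℕ) : flipB b x y = flipB b y x := by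
  simp [flipB, Iff.comm]

lemma mism_self (b : ℕ) (L : List ℕ) : mism b L L = 0 := by
  induction L with
  | nil => rfl
  | cons x L ih => simp [flipB_self, ih]

lemma mism_comm (b : ℕ) (L L' : List ℕ) : mism b L L' = mism b L' L := by
  induction L generalizing L' with
  | nil => simp
  | cons x L ih => cases L' with
    | nil => simp
    | cons y L' => simp [flipB_comm, ih]

lemma mism_eraseIdx (b : ℕ) : ∀ (i : ℕ) (L L' : List ℕ) (h : i < L.length) (h' : i < L'.length),
    mism b (L.eraseIdx i) (L'.eraseIdx i) + flipB b L[i] L'[i] = mism b L L' := by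
  intro i
  induction i with
  | zero =>
    intro L L' h h'
    cases L with | nil => simp at h | cons x L =>
    cases L' with | nil => simp at h' | cons y L' =>
    simp [Nat.add_comm]
  | succ i ih =>
    intro L L' h h'
    cases L with | nil => simp at h | cons x L =>
    cases L' with | nil => simp at h' | cons y L' =>
    simp only [List.eraseIdx_cons_succ, mism_cons, List.getElem_cons_succ]
    rw [Nat.add_assoc, ih L L' (by simpa using h) (by simpa using h')]

lemma mism_zero_of_gt (b : ℕ) : ∀ (L L' : List ℕ), (∀ x ∈ L, b < x) → (∀ x ∈ L', b < x) →
    mism b L L' = 0 := by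
  intro L
  induction L with
  | nil => simp
  | cons x L ih =>
    intro L' hL hL'
    cases L' with
    | nil => simp
    | cons y L' =>
      have hx : ¬ x ≤ b := by simpa using Nat.not_le.mpr (hL x (by simp))
      have hy : ¬ y ≤ b := by simpa using Nat.not_le.mpr (hL' y (by simp))
      have : flipB b x y = 0 := by simp [flipB]; tauto
      rw [mism_cons, this, Nat.zero_add]
      exact ih L' (fun z hz => hL z (by simp [hz])) (fun z hz => hL' z (by simp [hz]))

/-- shift lemma: comparing a sorted list with (x :: itself minus index k) has at most one flip -/
lemma mism_shift (b : ℕ) : ∀ (M : List ℕ) (x k : ℕ), List.Pairwise (· < ·) (x :: M) →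
    mism b M (x :: M.eraseIdx k) ≤ 1 := by
  intro M
  induction M with
  | nil => simp
  | cons y M1 ih =>
    intro x k hs
    have hxy : x < y := (List.pairwise_cons.mp hs).1 y (by simp)
    have hs1 : List.Pairwise (· < ·) (y :: M1) := (List.pairwise_cons.mp hs).2
    cases k with
    | zero =>
      simp only [List.eraseIdx_cons_zero, mism_cons]
      have h2 : mism b M1 M1 = 0 := mism_self b M1
      have : flipB b y x ≤ 1 := by unfold flipB; split <;> simp
      omega
    | succ k =>
      simp only [List.eraseIdx_cons_succ, mism_cons]
      by_cases hf : y ≤ b ↔ x ≤ b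
      · have : flipB b y x = 0 := by simp [flipB, hf]
        rw [this, Nat.zero_add]
        exact ih y k hs1
      · -- flip: since x < y, must have x ≤ b < y; then everything in M1 and y exceed b
        have hxb : x ≤ b ∧ b < y := by
          rcases Nat.le_total y b with h | h
          · exact absurd (by constructor <;> intro _ <;> omega) hf
          · rcases Nat.lt_or_ge b y with h2 | h2
            · constructor
              · by_contra hx; exact hf ⟨fun hy => absurd hy (by omega), fun hx' => absurd hx' hx⟩
              · exact h2
            · exact absurd (by constructor <;> intro _ <;> omega) hf
        have hflip : flipB b y x = 1 := by simp [flipB, hf]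
        have hz : mism b M1 (y :: M1.eraseIdx k) = 0 := by
          apply mism_zero_of_gt
          · intro z hz
            exact lt_trans hxb.2 ((List.pairwise_cons.mp hs1).1 z hz)
          · intro z hz
            rcases List.mem_cons.mp hz with rfl | hz
            · exact hxb.2
            · exact lt_trans hxb.2 ((List.pairwise_cons.mp hs1).1 z (List.mem_of_mem_eraseIdx hz))
        omega

/-- comparing two single-index erasures of the same sorted list: at most one flip -/
lemma mism_eraseIdx_eraseIdx (b : ℕ) : ∀ (T : List ℕ) (i j : ℕ), List.Pairwise (· < ·) T →
    mism b (T.eraseIdx i) (T.eraseIdx j) ≤ 1 := by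
  have key : ∀ (T : List ℕ) (i j : ℕ), i ≤ j → List.Pairwise (· < ·) T →
      mism b (T.eraseIdx i) (T.eraseIdx j) ≤ 1 := by
    intro T
    induction T with
    | nil => simp
    | cons x T1 ih =>
      intro i j hij hs
      cases i with
      | zero =>
        cases j with
        | zero => simp [mism_self]
        | succ j =>
          simp only [List.eraseIdx_cons_zero, List.eraseIdx_cons_succ]
          exact mism_shift b T1 x j hs
      | succ i =>
        cases j with
        | zero => omega
        | succ j =>
          simp only [List.eraseIdx_cons_succ, mism_cons, flipB_self, Nat.zero_add]
          exact ih i j (by omega) (List.pairwise_cons.mp hs).2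
  intro T i j hs
  rcases Nat.le_total i j with h | h
  · exact key T i j h hs
  · rw [mism_comm]; exact key T j i h hs

lemma sort_step (U : Finset ℕ) (t : ℕ) (h1 : 1 ≤ t) (h2 : t < (U.sort (· ≤ ·)).length) :
    ((U.erase ((U.sort (· ≤ ·)).getD 0 0)).erase ((U.sort (· ≤ ·)).getD t 0)).sort (· ≤ ·) =
      ((U.sort (· ≤ ·)).tail).eraseIdx (t - 1) := by
  set L := U.sort (· ≤ ·) with hL
  have hlen0 : 0 < L.length := by omega
  have hnd : L.Nodup := U.sort_nodup (· ≤ ·)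
  have hu0 : L.getD 0 0 = L[0] := List.getD_eq_getElem L 0 hlen0
  have hut : L.getD t 0 = L[t] := List.getD_eq_getElem L 0 h2
  -- the pure list identity
  have hlist : (L.erase L[0]).erase L[t] = L.tail.eraseIdx (t - 1) := by
    have e0 : L.erase L[0] = L.eraseIdx 0 := hnd.erase_getElem 0 hlen0
    rw [e0, List.eraseIdx_zero]
    have htail : L[t] = L.tail[t - 1]'(by rw [List.length_tail]; omega) := by
      rw [List.getElem_tail]; congr 1; omega
    rw [htail]
    exact (hnd.sublist (List.tail_sublist L)).erase_getElem (t - 1)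
      (by rw [List.length_tail]; omega)
  rw [hu0, hut, ← hlist]
  have hperm : (((U.erase L[0]).erase L[t]).sort (· ≤ ·)).Perm ((L.erase L[0]).erase L[t]) := by
    rw [← Multiset.coe_eq_coe]
    rw [Finset.sort_eq]
    rw [Finset.erase_val, Finset.erase_val]
    rw [← Finset.sort_eq U (· ≤ ·), ← hL]
    rw [← Multiset.coe_erase, ← Multiset.coe_erase]
  exact List.Perm.eq_of_pairwise' (Finset.pairwise_sort _ _)
    (List.Pairwise.sublist (List.erase_sublist.trans List.erase_sublist)
      (Finset.pairwise_sort _ _)) hperm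

def Valid : ℕ → List ℕ → Prop
  | _, [] => True
  | n, a :: ts => 1 ≤ a ∧ a < n ∧ Valid (n - 2) ts

def crossL (b : ℕ) (l : List (ℕ × ℕ)) : ℕ :=
  (l.filter fun q => q.1 ≤ b ∧ b < q.2).length

lemma buildMatching_cons (U : Finset ℕ) (a : ℕ) (ts : List ℕ) :
    buildMatching U (a :: ts) = ((U.sort (· ≤ ·)).getD 0 0, (U.sort (· ≤ ·)).getD a 0) ::
      buildMatching ((U.erase ((U.sort (· ≤ ·)).getD 0 0)).erase
        ((U.sort (· ≤ ·)).getD a 0)) ts := rfl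

lemma crossL_cons (b u v : ℕ) (l : List (ℕ × ℕ)) :
    crossL b ((u, v) :: l) = (if u ≤ b ∧ b < v then 1 else 0) + crossL b l := by
  simp only [crossL, List.filter_cons]
  split <;> split <;> simp_all <;> omega

/-- Step facts for a valid step. -/
lemma step_facts (U : Finset ℕ) (a : ℕ) (h1 : 1 ≤ a) (h2 : a < U.card) :
    ((U.erase ((U.sort (· ≤ ·)).getD 0 0)).erase ((U.sort (· ≤ ·)).getD a 0)).card
      = U.card - 2 := by
  set L := U.sort (· ≤ ·) with hL
  have hlen : L.length = U.card := Finset.length_sort _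
  have h0 : (0 : ℕ) < L.length := by omega
  have ha : a < L.length := by omega
  have hu0 : L.getD 0 0 = L[0] := List.getD_eq_getElem L 0 h0
  have hua : L.getD a 0 = L[a] := List.getD_eq_getElem L 0 ha
  have hlt : L[0] < L[a] := by
    have := (U.sortedLT_sort.pairwise).rel_get_of_lt (a := ⟨0, h0⟩) (b := ⟨a, ha⟩) (by simp; omega)
    simpa using this
  have hm0 : L[0] ∈ U := (Finset.mem_sort (· ≤ ·)).mp (List.getElem_mem h0)
  have hma : L[a] ∈ U := (Finset.mem_sort (· ≤ ·)).mp (List.getElem_mem ha)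
  rw [hu0, hua]
  rw [Finset.card_erase_of_mem (Finset.mem_erase.mpr ⟨Nat.ne_of_gt hlt, hma⟩),
    Finset.card_erase_of_mem hm0]
  omega

lemma crossL_diff (b : ℕ) : ∀ (ts : List ℕ) (U V : Finset ℕ), U.card = V.card →
    Valid U.card ts →
    |(crossL b (buildMatching U ts) : ℤ) - (crossL b (buildMatching V ts) : ℤ)|
      ≤ mism b (U.sort (· ≤ ·)) (V.sort (· ≤ ·)) := by
  intro ts
  induction ts with
  | nil => intro U V _ _; simp [buildMatching, crossL]
  | cons a ts ih =>
    intro U V hcard hv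
    obtain ⟨h1, h2, hv'⟩ := hv
    obtain ⟨k, rfl⟩ : ∃ k, a = k + 1 := ⟨a - 1, by omega⟩
    set LU := U.sort (· ≤ ·) with hLU
    set LV := V.sort (· ≤ ·) with hLV
    have hlenU : LU.length = U.card := Finset.length_sort _
    have hlenV : LV.length = V.card := Finset.length_sort _
    have haU : k + 1 < LU.length := by omega
    have haV : k + 1 < LV.length := by omega
    have h0U : (0:ℕ) < LU.length := by omega
    have h0V : (0:ℕ) < LV.length := by omega
    rw [buildMatching_cons, buildMatching_cons, crossL_cons, crossL_cons]
    push_cast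
    set U1 := (U.erase (LU.getD 0 0)).erase (LU.getD (k+1) 0) with hU1
    set V1 := (V.erase (LV.getD 0 0)).erase (LV.getD (k+1) 0) with hV1
    have hU1s : U1.sort (· ≤ ·) = LU.tail.eraseIdx k := sort_step U (k+1) h1 haU
    have hV1s : V1.sort (· ≤ ·) = LV.tail.eraseIdx k := sort_step V (k+1) h1 haV
    have hU1c : U1.card = U.card - 2 := step_facts U (k+1) h1 h2
    have hV1c : V1.card = V.card - 2 := step_facts V (k+1) h1 (hcard ▸ h2)
    have hrest := ih U1 V1 (by omega) (by rw [hU1c]; exact hv')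
    rw [hU1s, hV1s] at hrest
    -- mismatch decomposition
    have hta : k < LU.tail.length := by rw [List.length_tail]; omega
    have htaV : k < LV.tail.length := by rw [List.length_tail]; omega
    have hm1 : mism b LU.tail LV.tail + flipB b LU[0] LV[0] = mism b LU LV := by
      have := mism_eraseIdx b 0 LU LV h0U h0V
      simpa [List.eraseIdx_zero] using this
    have hm2 : mism b (LU.tail.eraseIdx k) (LV.tail.eraseIdx k)
        + flipB b LU[k+1] LV[k+1] = mism b LU.tail LV.tail := by
      have := mism_eraseIdx b k LU.tail LV.tail hta htaV
      rwa [List.getElem_tail, List.getElem_tail] at this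
    -- pair indicator difference bound
    have hu0 : LU.getD 0 0 = LU[0] := List.getD_eq_getElem LU 0 h0U
    have hua : LU.getD (k+1) 0 = LU[k+1] := List.getD_eq_getElem LU 0 haU
    have hv0 : LV.getD 0 0 = LV[0] := List.getD_eq_getElem LV 0 h0V
    have hva : LV.getD (k+1) 0 = LV[k+1] := List.getD_eq_getElem LV 0 haV
    set cU : ℤ := if LU.getD 0 0 ≤ b ∧ b < LU.getD (k+1) 0 then 1 else 0 with hcU
    set cV : ℤ := if LV.getD 0 0 ≤ b ∧ b < LV.getD (k+1) 0 then 1 else 0 with hcV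
    have hpair : |cU - cV| ≤ (flipB b LU[0] LV[0] : ℤ) + flipB b LU[k+1] LV[k+1] := by
      rw [hcU, hcV, hu0, hua, hv0, hva]; clear hm1 hm2 hrest hLU hLV
      by_cases f0 : (LU[0] ≤ b ↔ LV[0] ≤ b) <;> by_cases fa : (LU[k+1] ≤ b ↔ LV[k+1] ≤ b) <;>
        simp only [flipB, f0, fa, if_true, if_false] <;>
        split_ifs <;> simp_all <;> omega
    calc |(cU + crossL b (buildMatching U1 ts)) - (cV + crossL b (buildMatching V1 ts))|
        = |(cU - cV) + ((crossL b (buildMatching U1 ts) : ℤ) - crossL b (buildMatching V1 ts))| := by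
          ring_nf
      _ ≤ |cU - cV| + |(crossL b (buildMatching U1 ts) : ℤ) - crossL b (buildMatching V1 ts)| :=
          abs_add_le _ _
      _ ≤ ((flipB b LU[0] LV[0] : ℤ) + flipB b LU[k+1] LV[k+1])
            + mism b (LU.tail.eraseIdx k) (LV.tail.eraseIdx k) := add_le_add hpair hrest
      _ ≤ mism b LU LV := by push_cast; omega

lemma crossL_diff_one (b : ℕ) : ∀ (P : List ℕ) (x y : ℕ) (S : List ℕ) (U : Finset ℕ),
    Valid U.card (P ++ x :: S) → Valid U.card (P ++ y :: S) →
    |(crossL b (buildMatching U (P ++ x :: S)) : ℤ)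
      - crossL b (buildMatching U (P ++ y :: S))| ≤ 2 := by
  intro P
  induction P with
  | nil =>
    intro x y S U hvx hvy
    obtain ⟨hx1, hx2, hvS⟩ := hvx
    obtain ⟨hy1, hy2, _⟩ := hvy
    obtain ⟨kx, rfl⟩ : ∃ k, x = k + 1 := ⟨x - 1, by omega⟩
    obtain ⟨ky, rfl⟩ : ∃ k, y = k + 1 := ⟨y - 1, by omega⟩
    set L := U.sort (· ≤ ·) with hL
    have hlen : L.length = U.card := Finset.length_sort _
    simp only [List.nil_append]
    rw [buildMatching_cons, buildMatching_cons, crossL_cons, crossL_cons]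
    push_cast
    set U1 := (U.erase (L.getD 0 0)).erase (L.getD (kx+1) 0) with hU1
    set V1 := (U.erase (L.getD 0 0)).erase (L.getD (ky+1) 0) with hV1
    have hU1s : U1.sort (· ≤ ·) = L.tail.eraseIdx kx := sort_step U (kx+1) hx1 (by rw [← hL, hlen]; exact hx2)
    have hV1s : V1.sort (· ≤ ·) = L.tail.eraseIdx ky := sort_step U (ky+1) hy1 (by rw [← hL, hlen]; exact hy2)
    have hU1c : U1.card = U.card - 2 := step_facts U (kx+1) hx1 hx2
    have hV1c : V1.card = U.card - 2 := step_facts U (ky+1) hy1 hy2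
    have hrest := crossL_diff b S U1 V1 (by omega) (by rw [hU1c]; exact hvS)
    rw [hU1s, hV1s] at hrest
    have hmis : mism b (L.tail.eraseIdx kx) (L.tail.eraseIdx ky) ≤ 1 :=
      mism_eraseIdx_eraseIdx b L.tail kx ky
        (List.Pairwise.sublist (List.tail_sublist L) (U.sortedLT_sort.pairwise))
    have hrest1 : |(crossL b (buildMatching U1 S) : ℤ) - crossL b (buildMatching V1 S)| ≤ 1 := by
      refine hrest.trans ?_
      exact_mod_cast Nat.cast_le.mpr hmis
    set cx : ℤ := if L.getD 0 0 ≤ b ∧ b < L.getD (kx+1) 0 then 1 else 0 with hcx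
    set cy : ℤ := if L.getD 0 0 ≤ b ∧ b < L.getD (ky+1) 0 then 1 else 0 with hcy
    have hc : |cx - cy| ≤ 1 := by
      rw [hcx, hcy]; split_ifs <;> simp
    calc |(cx + crossL b (buildMatching U1 S)) - (cy + crossL b (buildMatching V1 S))|
        = |(cx - cy) + ((crossL b (buildMatching U1 S) : ℤ) - crossL b (buildMatching V1 S))| := by
          ring_nf
      _ ≤ |cx - cy| + |(crossL b (buildMatching U1 S) : ℤ) - crossL b (buildMatching V1 S)| :=
          abs_add_le _ _
      _ ≤ 1 + 1 := add_le_add hc hrest1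
      _ = 2 := by norm_num
  | cons p P ih =>
    intro x y S U hvx hvy
    obtain ⟨hp1, hp2, hvx'⟩ := hvx
    obtain ⟨_, _, hvy'⟩ := hvy
    simp only [List.cons_append]
    rw [buildMatching_cons (ts := P ++ x :: S), buildMatching_cons (ts := P ++ y :: S),
      crossL_cons, crossL_cons]
    set U1 := (U.erase ((U.sort (· ≤ ·)).getD 0 0)).erase ((U.sort (· ≤ ·)).getD p 0) with hU1
    have hU1c : U1.card = U.card - 2 := step_facts U p hp1 hp2
    have := ih x y S U1 (by rw [hU1c]; exact hvx') (by rw [hU1c]; exact hvy')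
    push_cast
    rw [add_sub_add_left_eq_sub]
    exact this

lemma valid_of_bounds : ∀ (L : List ℕ) (n : ℕ),
    (∀ i (h : i < L.length), 1 ≤ L[i] ∧ L[i] < n - 2*i) → Valid n L := by
  intro L
  induction L with
  | nil => intro n _; trivial
  | cons a L ih =>
    intro n h
    have h0 := h 0 (by simp)
    refine ⟨by simpa using h0.1, by simpa using h0.2, ?_⟩
    apply ih
    intro i hi
    have := h (i+1) (by simpa using hi)
    simp only [List.getElem_cons_succ] at this
    constructor
    · exact this.1
    · omega

/-- If two choice tuples `t, t' ∈ Π` of the configuration model differ in at most one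
coordinate `l`, then the numbers of pairs crossing a fixed boundary `b` differ by at most 2. -/
theorem stmt9 (N d η : ℕ) (hη : 2 * η = N * d) (b : ℕ)
    (t t' : Fin η → ℕ)
    (ht : ∀ r : Fin η, 1 ≤ t r ∧ t r ≤ N * d - 2 * r.val - 1)
    (ht' : ∀ r : Fin η, 1 ≤ t' r ∧ t' r ≤ N * d - 2 * r.val - 1)
    (l : Fin η) (hdiff : ∀ r, r ≠ l → t r = t' r) :
    |(crossCount N d b (List.ofFn t) : ℤ) - (crossCount N d b (List.ofFn t') : ℤ)| ≤ 2 := by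
  have hvalid : ∀ (f : Fin η → ℕ), (∀ r : Fin η, 1 ≤ f r ∧ f r ≤ N*d - 2*r.val - 1) →
      Valid (N*d) (List.ofFn f) := by
    intro f hf
    apply valid_of_bounds
    intro i hi
    rw [List.length_ofFn] at hi
    rw [List.getElem_ofFn]
    have h1 := hf ⟨i, hi⟩
    simp only [Fin.val_mk] at h1
    exact ⟨h1.1, by omega⟩
  have hlofn : l.val < (List.ofFn t).length := by simp [l.isLt]
  have hlofn' : l.val < (List.ofFn t').length := by simp [l.isLt]
  set P := (List.ofFn t).take l.val with hP
  set S := (List.ofFn t).drop (l.val + 1) with hS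
  have hsplit : List.ofFn t = P ++ t l :: S := by
    rw [hP, hS]
    conv_lhs => rw [← List.take_append_drop l.val (List.ofFn t)]
    congr 1
    rw [List.drop_eq_getElem_cons hlofn]
    congr 1
    rw [List.getElem_ofFn]
  have htake : (List.ofFn t').take l.val = P := by
    rw [hP]
    apply List.ext_getElem (by simp)
    intro i h1 h2
    simp only [List.getElem_take, List.getElem_ofFn]
    have hil : i < l.val := by simp [List.length_take] at h1; omega
    exact (hdiff _ (Fin.ne_of_val_ne (by simpa using Nat.ne_of_lt hil))).symm
  have hdrop : (List.ofFn t').drop (l.val + 1) = S := by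
    rw [hS]
    apply List.ext_getElem (by simp)
    intro i h1 h2
    simp only [List.getElem_drop, List.getElem_ofFn]
    refine (hdiff _ (Fin.ne_of_val_ne ?_)).symm
    simp
    omega
  have hsplit' : List.ofFn t' = P ++ t' l :: S := by
    rw [← htake, ← hdrop]
    conv_lhs => rw [← List.take_append_drop l.val (List.ofFn t')]
    congr 1
    rw [List.drop_eq_getElem_cons hlofn']
    congr 1
    rw [List.getElem_ofFn]
  have hcard : (Finset.range (N * d)).card = N * d := Finset.card_range _
  have hv1 : Valid (Finset.range (N * d)).card (P ++ t l :: S) := by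
    rw [hcard, ← hsplit]; exact hvalid t ht
  have hv2 : Valid (Finset.range (N * d)).card (P ++ t' l :: S) := by
    rw [hcard, ← hsplit']; exact hvalid t' ht'
  have := crossL_diff_one b P (t l) (t' l) S (Finset.range (N * d)) hv1 hv2
  rw [← hsplit, ← hsplit'] at this
  exact this
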